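/- Let α ≤ β be real numbers. Suppose h(x) ≥ α for all x ∈ ℝⁿ, there exists x̂ ∈ ℝⁿ with h(x̂) < β, and the system f(x) < 0, α ≤ h(x) ≤ β has no solution x ∈ ℝⁿ. Then there exists a real number ν ≥ 0 such that f(x) + ν·(h(x) − β) ≥ 0 for all x ∈ ℝⁿ; in particular (S₂) holds with μ = −ν. -/

import Mathlib

open Matrix

/-- The quadratic function `x ↦ xᵀ M x + 2 mᵀ x + r`. -/
noncomputable def qfun {n : ℕ} (M : Matrix (Fin n) (Fin n) ℝ) (m : Fin n → ℝ) (r : ℝ)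
    (x : Fin n → ℝ) : ℝ :=
  x ⬝ᵥ M *ᵥ x + 2 * (m ⬝ᵥ x) + r

open Real

noncomputable def Fh {n : ℕ} (M : Matrix (Fin n) (Fin n) ℝ) (m : Fin n → ℝ) (r : ℝ)
    (x : Fin n → ℝ) (t : ℝ) : ℝ :=
  x ⬝ᵥ M *ᵥ x + 2 * t * (m ⬝ᵥ x) + r * t ^ 2

lemma Fh_expand {n : ℕ} (M : Matrix (Fin n) (Fin n) ℝ) (m : Fin n → ℝ) (r : ℝ)
    (c s t1 t2 : ℝ) (x1 x2 : Fin n → ℝ) :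
    Fh M m r (c • x1 + s • x2) (c * t1 + s * t2)
      = c ^ 2 * Fh M m r x1 t1 + s ^ 2 * Fh M m r x2 t2
        + 2 * c * s * ((x1 ⬝ᵥ M *ᵥ x2 + x2 ⬝ᵥ M *ᵥ x1) / 2
            + t1 * (m ⬝ᵥ x2) + t2 * (m ⬝ᵥ x1) + r * (t1 * t2)) := by
  simp only [Fh, dotProduct_add, add_dotProduct, Matrix.mulVec_add, Matrix.mulVec_smul,
    dotProduct_smul, smul_dotProduct, smul_eq_mul]
  ring

lemma Fh_smul {n : ℕ} (M : Matrix (Fin n) (Fin n) ℝ) (m : Fin n → ℝ) (r : ℝ)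
    (ρ : ℝ) (x : Fin n → ℝ) (t : ℝ) :
    Fh M m r (ρ • x) (ρ * t) = ρ ^ 2 * Fh M m r x t := by
  simp only [Fh, Matrix.mulVec_smul, dotProduct_smul, smul_dotProduct, smul_eq_mul]
  ring

/-- determinant-type auxiliary trig polynomial -/
noncomputable def uFgen (P1 P2 X θ : ℝ) : ℝ :=
  (Real.cos θ) ^ 2 * P1 + (Real.sin θ) ^ 2 * P2 - 2 * (Real.cos θ) * (Real.sin θ) * X

noncomputable def vFgen (P1 P2 X θ : ℝ) : ℝ :=
  (Real.sin θ) ^ 2 * P1 + (Real.cos θ) ^ 2 * P2 + 2 * (Real.sin θ) * (Real.cos θ) * X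

noncomputable def dgen (P1 P2 X Q1 Q2 Y θ : ℝ) : ℝ :=
  uFgen P1 P2 X θ * vFgen Q1 Q2 Y θ - uFgen Q1 Q2 Y θ * vFgen P1 P2 X θ

lemma dgen_cont (P1 P2 X Q1 Q2 Y : ℝ) : Continuous (dgen P1 P2 X Q1 Q2 Y) := by
  unfold dgen uFgen vFgen; fun_prop

lemma dgen_zero (P1 P2 X Q1 Q2 Y : ℝ) : dgen P1 P2 X Q1 Q2 Y 0 = P1 * Q2 - Q1 * P2 := by
  simp [dgen, uFgen, vFgen]

lemma dgen_pi2 (P1 P2 X Q1 Q2 Y : ℝ) :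
    dgen P1 P2 X Q1 Q2 Y (π / 2) = -(P1 * Q2 - Q1 * P2) := by
  simp [dgen, uFgen, vFgen]; ring

lemma dgen_root (P1 P2 X Q1 Q2 Y : ℝ) : ∃ θ, dgen P1 P2 X Q1 Q2 Y θ = 0 := by
  have hab : (0:ℝ) ≤ π / 2 := by linarith [Real.pi_pos]
  rcases le_total (dgen P1 P2 X Q1 Q2 Y 0) 0 with h | h
  · have hmem : (0:ℝ) ∈ Set.Icc (dgen P1 P2 X Q1 Q2 Y 0) (dgen P1 P2 X Q1 Q2 Y (π/2)) := by
      constructor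
      · exact h
      · rw [dgen_pi2]; rw [dgen_zero] at h; linarith
    obtain ⟨θ, _, hθ⟩ := intermediate_value_Icc hab (dgen_cont P1 P2 X Q1 Q2 Y).continuousOn hmem
    exact ⟨θ, hθ⟩
  · have hmem : (0:ℝ) ∈ Set.Icc (dgen P1 P2 X Q1 Q2 Y (π/2)) (dgen P1 P2 X Q1 Q2 Y 0) := by
      constructor
      · rw [dgen_pi2]; rw [dgen_zero] at h; linarith
      · exact h
    obtain ⟨θ, _, hθ⟩ := intermediate_value_Icc' hab (dgen_cont P1 P2 X Q1 Q2 Y).continuousOn hmem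
    exact ⟨θ, hθ⟩

/-- Dines-type additivity: the joint range of two homogenized
quadratic forms is closed under addition. -/
lemma dines_add {n : ℕ} (M1 : Matrix (Fin n) (Fin n) ℝ) (m1 : Fin n → ℝ) (r1 : ℝ)
    (M2 : Matrix (Fin n) (Fin n) ℝ) (m2 : Fin n → ℝ) (r2 : ℝ)
    (x1 x2 : Fin n → ℝ) (t1 t2 : ℝ) :
    ∃ (x : Fin n → ℝ) (t : ℝ),
      Fh M1 m1 r1 x t = Fh M1 m1 r1 x1 t1 + Fh M1 m1 r1 x2 t2 ∧
      Fh M2 m2 r2 x t = Fh M2 m2 r2 x1 t1 + Fh M2 m2 r2 x2 t2 := by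
  obtain ⟨θ, hθ⟩ := dgen_root (Fh M1 m1 r1 x1 t1) (Fh M1 m1 r1 x2 t2)
    ((x1 ⬝ᵥ M1 *ᵥ x2 + x2 ⬝ᵥ M1 *ᵥ x1) / 2
      + t1 * (m1 ⬝ᵥ x2) + t2 * (m1 ⬝ᵥ x1) + r1 * (t1 * t2))
    (Fh M2 m2 r2 x1 t1) (Fh M2 m2 r2 x2 t2)
    ((x1 ⬝ᵥ M2 *ᵥ x2 + x2 ⬝ᵥ M2 *ᵥ x1) / 2
      + t1 * (m2 ⬝ᵥ x2) + t2 * (m2 ⬝ᵥ x1) + r2 * (t1 * t2))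
  have hcs : Real.cos θ ^ 2 + Real.sin θ ^ 2 = 1 := Real.cos_sq_add_sin_sq θ
  set cc := Real.cos θ with hcc
  set ss := Real.sin θ with hss
  set xu : Fin n → ℝ := cc • x1 + (-ss) • x2 with hxu
  set tu : ℝ := cc * t1 + (-ss) * t2 with htu
  set xv : Fin n → ℝ := ss • x1 + cc • x2 with hxv
  set tv : ℝ := ss * t1 + cc * t2 with htv
  have hu1 : Fh M1 m1 r1 xu tu = uFgen (Fh M1 m1 r1 x1 t1) (Fh M1 m1 r1 x2 t2)
      ((x1 ⬝ᵥ M1 *ᵥ x2 + x2 ⬝ᵥ M1 *ᵥ x1) / 2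
        + t1 * (m1 ⬝ᵥ x2) + t2 * (m1 ⬝ᵥ x1) + r1 * (t1 * t2)) θ := by
    rw [hxu, htu, Fh_expand, uFgen]; try ring
  have hu2 : Fh M2 m2 r2 xu tu = uFgen (Fh M2 m2 r2 x1 t1) (Fh M2 m2 r2 x2 t2)
      ((x1 ⬝ᵥ M2 *ᵥ x2 + x2 ⬝ᵥ M2 *ᵥ x1) / 2
        + t1 * (m2 ⬝ᵥ x2) + t2 * (m2 ⬝ᵥ x1) + r2 * (t1 * t2)) θ := by
    rw [hxu, htu, Fh_expand, uFgen]; try ring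
  have hv1 : Fh M1 m1 r1 xv tv = vFgen (Fh M1 m1 r1 x1 t1) (Fh M1 m1 r1 x2 t2)
      ((x1 ⬝ᵥ M1 *ᵥ x2 + x2 ⬝ᵥ M1 *ᵥ x1) / 2
        + t1 * (m1 ⬝ᵥ x2) + t2 * (m1 ⬝ᵥ x1) + r1 * (t1 * t2)) θ := by
    rw [hxv, htv, Fh_expand, vFgen]; try ring
  have hv2 : Fh M2 m2 r2 xv tv = vFgen (Fh M2 m2 r2 x1 t1) (Fh M2 m2 r2 x2 t2)
      ((x1 ⬝ᵥ M2 *ᵥ x2 + x2 ⬝ᵥ M2 *ᵥ x1) / 2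
        + t1 * (m2 ⬝ᵥ x2) + t2 * (m2 ⬝ᵥ x1) + r2 * (t1 * t2)) θ := by
    rw [hxv, htv, Fh_expand, vFgen]; try ring
  have hdet : Fh M1 m1 r1 xu tu * Fh M2 m2 r2 xv tv
      - Fh M2 m2 r2 xu tu * Fh M1 m1 r1 xv tv = 0 := by
    rw [hu1, hu2, hv1, hv2]; exact hθ
  have hsum1 : Fh M1 m1 r1 xu tu + Fh M1 m1 r1 xv tv
      = Fh M1 m1 r1 x1 t1 + Fh M1 m1 r1 x2 t2 := by
    rw [hu1, hv1, uFgen, vFgen]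
    linear_combination (Fh M1 m1 r1 x1 t1 + Fh M1 m1 r1 x2 t2) * hcs
  have hsum2 : Fh M2 m2 r2 xu tu + Fh M2 m2 r2 xv tv
      = Fh M2 m2 r2 x1 t1 + Fh M2 m2 r2 x2 t2 := by
    rw [hu2, hv2, uFgen, vFgen]
    linear_combination (Fh M2 m2 r2 x1 t1 + Fh M2 m2 r2 x2 t2) * hcs
  by_cases hu : Fh M1 m1 r1 xu tu = 0 ∧ Fh M2 m2 r2 xu tu = 0
  · exact ⟨xv, tv, by rw [← hsum1, hu.1, zero_add], by rw [← hsum2, hu.2, zero_add]⟩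
  · obtain ⟨κ, hκ1, hκ2⟩ : ∃ κ : ℝ, Fh M1 m1 r1 xv tv = κ * Fh M1 m1 r1 xu tu ∧
        Fh M2 m2 r2 xv tv = κ * Fh M2 m2 r2 xu tu := by
      by_cases h1 : Fh M1 m1 r1 xu tu = 0
      · have h2 : Fh M2 m2 r2 xu tu ≠ 0 := fun h => hu ⟨h1, h⟩
        have hv10 : Fh M1 m1 r1 xv tv = 0 := by
          have hz : Fh M2 m2 r2 xu tu * Fh M1 m1 r1 xv tv = 0 := by
            rw [h1] at hdet; linarith
          rcases mul_eq_zero.mp hz with h | h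
          · exact absurd h h2
          · exact h
        exact ⟨Fh M2 m2 r2 xv tv / Fh M2 m2 r2 xu tu,
          by rw [hv10, h1, mul_zero], by field_simp⟩
      · refine ⟨Fh M1 m1 r1 xv tv / Fh M1 m1 r1 xu tu, by field_simp, ?_⟩
        field_simp
        linear_combination hdet
    rcases le_or_gt 0 (1 + κ) with h1κ | h1κ
    · refine ⟨Real.sqrt (1 + κ) • xu, Real.sqrt (1 + κ) * tu, ?_, ?_⟩
      · rw [Fh_smul, Real.sq_sqrt h1κ, ← hsum1, hκ1]; ring
      · rw [Fh_smul, Real.sq_sqrt h1κ, ← hsum2, hκ2]; ring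
    · have hκneg : κ < 0 := by linarith
      have hratio : 0 ≤ (1 + κ) / κ := by
        rw [div_nonneg_iff]; right; exact ⟨by linarith, hκneg.le⟩
      refine ⟨Real.sqrt ((1 + κ) / κ) • xv, Real.sqrt ((1 + κ) / κ) * tv, ?_, ?_⟩
      · rw [Fh_smul, Real.sq_sqrt hratio, ← hsum1, hκ1]
        field_simp [hκneg.ne]
      · rw [Fh_smul, Real.sq_sqrt hratio, ← hsum2, hκ2]
        field_simp [hκneg.ne]

/-- If `h ≥ α` everywhere and the Slater condition `h(x̂) < β` holds, then
unsolvability of the interval system yields a one-sided multiplier `ν ≥ 0`,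
and in particular `(S₂)` holds with `μ = -ν`. -/
theorem s_lemma_lower_inactive (n : ℕ) (hn : 0 < n)
    (A B : Matrix (Fin n) (Fin n) ℝ) (hA : A.IsSymm) (hB : B.IsSymm)
    (a b : Fin n → ℝ) (c d : ℝ) (α β : ℝ) (hαβ : α ≤ β)
    (hlow : ∀ x : Fin n → ℝ, α ≤ qfun B b d x)
    (hSlater : ∃ xhat : Fin n → ℝ, qfun B b d xhat < β)
    (hunsolv : ¬ ∃ x : Fin n → ℝ,
      qfun A a c x < 0 ∧ α ≤ qfun B b d x ∧ qfun B b d x ≤ β) :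
    ∃ ν : ℝ, 0 ≤ ν ∧
      (∀ x : Fin n → ℝ, qfun A a c x + ν * (qfun B b d x - β) ≥ 0) ∧
      (∀ x : Fin n → ℝ,
        qfun A a c x + (-(min (-ν) 0)) * (qfun B b d x - β)
          + (max (-ν) 0) * (α - qfun B b d x) ≥ 0) := by
  obtain ⟨xh, hxh⟩ := hSlater
  have e1 : ∀ x : Fin n → ℝ, Fh A a c x 1 = qfun A a c x := by
    intro x; simp only [Fh, qfun]; ring
  have e2 : ∀ x : Fin n → ℝ, Fh B b (d - β) x 1 = qfun B b d x - β := by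
    intro x; simp only [Fh, qfun]; ring
  -- Claim: the homogenized system is also "unsolvable" in the strict sense.
  have claimA : ∀ (x : Fin n → ℝ) (t : ℝ), Fh B b (d - β) x t < 0 → 0 ≤ Fh A a c x t := by
    intro x t hG
    by_cases ht : t = 0
    · exfalso
      subst ht
      have hq : x ⬝ᵥ B *ᵥ x < 0 := by
        have h0 : Fh B b (d - β) x 0 = x ⬝ᵥ B *ᵥ x := by simp [Fh]
        rwa [h0] at hG
      set L := b ⬝ᵥ x with hLd
      set s : ℝ := max 1 ((2 * |L| + |d - α| + 1) / (-(x ⬝ᵥ B *ᵥ x))) with hsd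
      have hs1 : (1:ℝ) ≤ s := le_max_left _ _
      have hs0 : (0:ℝ) < s := by linarith
      have hnegq : (0:ℝ) < -(x ⬝ᵥ B *ᵥ x) := by linarith
      have hs2 : (2 * |L| + |d - α| + 1) / (-(x ⬝ᵥ B *ᵥ x)) ≤ s := le_max_right _ _
      have hsq : 2 * |L| + |d - α| + 1 ≤ s * (-(x ⬝ᵥ B *ᵥ x)) := by
        rw [div_le_iff₀ hnegq] at hs2; linarith
      have hlow' := hlow (s • x)
      have hval : qfun B b d (s • x) = s ^ 2 * (x ⬝ᵥ B *ᵥ x) + 2 * (s * L) + d := by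
        simp only [qfun, Matrix.mulVec_smul, dotProduct_smul, smul_dotProduct, smul_eq_mul, hLd]
        ring
      rw [hval] at hlow'
      have h1 : s * (x ⬝ᵥ B *ᵥ x) ≤ -(2 * |L| + |d - α| + 1) := by nlinarith
      have h2 : s ^ 2 * (x ⬝ᵥ B *ᵥ x) ≤ -(2 * (s * |L|)) - s * |d - α| - s := by
        nlinarith [mul_le_mul_of_nonneg_left h1 hs0.le]
      have h3 : 2 * (s * L) ≤ 2 * (s * |L|) := by
        nlinarith [mul_le_mul_of_nonneg_left (le_abs_self L) hs0.le]
      have h4 : d - α ≤ |d - α| := le_abs_self _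
      have h5 : |d - α| ≤ s * |d - α| := by
        nlinarith [mul_le_mul_of_nonneg_right hs1 (abs_nonneg (d - α))]
      linarith
    · have hx : x = t • (t⁻¹ • x) := (smul_inv_smul₀ ht x).symm
      have ht2 : 0 < t ^ 2 := by positivity
      have hG2 : t ^ 2 * Fh B b (d - β) (t⁻¹ • x) 1 < 0 := by
        rw [← Fh_smul, mul_one, ← hx]; exact hG
      have hgy : Fh B b (d - β) (t⁻¹ • x) 1 < 0 := by nlinarith
      have hhy : qfun B b d (t⁻¹ • x) ≤ β := by rw [e2] at hgy; linarith
      have hfy : 0 ≤ qfun A a c (t⁻¹ • x) := by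
        by_contra hc
        push_neg at hc
        exact hunsolv ⟨t⁻¹ • x, hc, hlow _, hhy⟩
      calc (0:ℝ) ≤ t ^ 2 * Fh A a c (t⁻¹ • x) 1 := by rw [e1]; positivity
        _ = Fh A a c (t • (t⁻¹ • x)) (t * 1) := (Fh_smul A a c t _ 1).symm
        _ = Fh A a c x t := by rw [mul_one, ← hx]
  -- The joint range
  have hDconv : Convex ℝ {pp : ℝ × ℝ | ∃ (x : Fin n → ℝ) (t : ℝ),
      Fh A a c x t = pp.1 ∧ Fh B b (d - β) x t = pp.2} := by
    rintro ⟨p1, p2⟩ ⟨xp, tp, hp1, hp2⟩ ⟨q1, q2⟩ ⟨xq, tq, hq1, hq2⟩ lp lq hlp hlq hsum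
    obtain ⟨x, t, h1, h2⟩ := dines_add A a c B b (d - β)
      (Real.sqrt lp • xp) (Real.sqrt lq • xq) (Real.sqrt lp * tp) (Real.sqrt lq * tq)
    have hcomb : lp • ((p1, p2) : ℝ × ℝ) + lq • ((q1, q2) : ℝ × ℝ)
        = (lp * p1 + lq * q1, lp * p2 + lq * q2) := by
      simp [Prod.ext_iff, smul_eq_mul]
    rw [hcomb]
    refine ⟨x, t, ?_, ?_⟩
    · rw [h1, Fh_smul, Fh_smul, Real.sq_sqrt hlp, Real.sq_sqrt hlq, hp1, hq1]
    · rw [h2, Fh_smul, Fh_smul, Real.sq_sqrt hlp, Real.sq_sqrt hlq, hp2, hq2]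
  have hOopen : IsOpen ({pp : ℝ × ℝ | pp.1 < 0} ∩ {pp : ℝ × ℝ | pp.2 < 0}) :=
    (isOpen_lt continuous_fst continuous_const).inter
      (isOpen_lt continuous_snd continuous_const)
  have hOconv : Convex ℝ ({pp : ℝ × ℝ | pp.1 < 0} ∩ {pp : ℝ × ℝ | pp.2 < 0}) :=
    (convex_halfSpace_lt ⟨fun _ _ => rfl, fun _ _ => rfl⟩ 0).inter
      (convex_halfSpace_lt ⟨fun _ _ => rfl, fun _ _ => rfl⟩ 0)
  have hdisj : Disjoint ({pp : ℝ × ℝ | pp.1 < 0} ∩ {pp : ℝ × ℝ | pp.2 < 0})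
      {pp : ℝ × ℝ | ∃ (x : Fin n → ℝ) (t : ℝ),
        Fh A a c x t = pp.1 ∧ Fh B b (d - β) x t = pp.2} := by
    rw [Set.disjoint_left]
    rintro ⟨p1, p2⟩ ⟨h1, h2⟩ ⟨x, t, hx1, hx2⟩
    have hFlt : Fh A a c x t < 0 := by rw [hx1]; exact h1
    have hGlt : Fh B b (d - β) x t < 0 := by rw [hx2]; exact h2
    exact absurd (claimA x t hGlt) (not_le.mpr hFlt)
  obtain ⟨f, u0, hfO, hfD⟩ := geometric_hahn_banach_open hOconv hOopen hDconv hdisj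
  set p := f ((1:ℝ), (0:ℝ)) with hpdef
  set q := f ((0:ℝ), (1:ℝ)) with hqdef
  have hf : ∀ z : ℝ × ℝ, f z = z.1 * p + z.2 * q := by
    intro z
    have hz : z = z.1 • (((1:ℝ), (0:ℝ)) : ℝ × ℝ) + z.2 • (((0:ℝ), (1:ℝ)) : ℝ × ℝ) := by
      simp [Prod.ext_iff]
    conv_lhs => rw [hz]
    rw [map_add, f.map_smul, f.map_smul, smul_eq_mul, smul_eq_mul, hpdef, hqdef]
  have hp : 0 ≤ p := by
    by_contra hc
    push_neg at hc
    set M := (|u0| + |q| + 1) / (-p) with hMd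
    have hM : 0 < M := div_pos (by positivity) (by linarith)
    have hmem : ((-M, -1) : ℝ × ℝ) ∈
        ({pp : ℝ × ℝ | pp.1 < 0} ∩ {pp : ℝ × ℝ | pp.2 < 0}) :=
      ⟨show -M < 0 by linarith, show (-1:ℝ) < 0 by norm_num⟩
    have hlt := hfO _ hmem
    rw [hf] at hlt
    have hMp : M * (-p) = |u0| + |q| + 1 := by
      rw [hMd]; field_simp [hc.ne]
    norm_num at hlt
    nlinarith [le_abs_self u0, le_abs_self q, neg_abs_le q]
  have hq : 0 ≤ q := by
    by_contra hc
    push_neg at hc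
    set M := (|u0| + |p| + 1) / (-q) with hMd
    have hM : 0 < M := div_pos (by positivity) (by linarith)
    have hmem : ((-1, -M) : ℝ × ℝ) ∈
        ({pp : ℝ × ℝ | pp.1 < 0} ∩ {pp : ℝ × ℝ | pp.2 < 0}) :=
      ⟨show (-1:ℝ) < 0 by norm_num, show -M < 0 by linarith⟩
    have hlt := hfO _ hmem
    rw [hf] at hlt
    have hMp : M * (-q) = |u0| + |p| + 1 := by
      rw [hMd]; field_simp [hc.ne]
    norm_num at hlt
    nlinarith [le_abs_self u0, le_abs_self p, neg_abs_le p]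
  have hu0 : 0 ≤ u0 := by
    by_contra hc
    push_neg at hc
    set ε := -u0 / (2 * (p + q) + 2) with hεd
    have hε : 0 < ε := div_pos (by linarith) (by linarith)
    have hmem : ((-ε, -ε) : ℝ × ℝ) ∈
        ({pp : ℝ × ℝ | pp.1 < 0} ∩ {pp : ℝ × ℝ | pp.2 < 0}) :=
      ⟨show -ε < 0 by linarith, show -ε < 0 by linarith⟩
    have hlt := hfO _ hmem
    rw [hf] at hlt
    have hεq : ε * (2 * (p + q) + 2) = -u0 := by
      rw [hεd]; field_simp
    norm_num at hlt
    nlinarith [mul_nonneg hε.le (add_nonneg hp hq)]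
  have hkey : ∀ (x : Fin n → ℝ) (t : ℝ), 0 ≤ p * Fh A a c x t + q * Fh B b (d - β) x t := by
    intro x t
    have hmem : ((Fh A a c x t, Fh B b (d - β) x t) : ℝ × ℝ) ∈
        {pp : ℝ × ℝ | ∃ (x : Fin n → ℝ) (t : ℝ),
          Fh A a c x t = pp.1 ∧ Fh B b (d - β) x t = pp.2} := ⟨x, t, rfl, rfl⟩
    have hge := hfD _ hmem
    rw [hf] at hge
    nlinarith
  have hppos : 0 < p := by
    rcases hp.lt_or_eq with h | h
    · exact h
    · exfalso
      have hG : qfun B b d xh - β < 0 := by linarith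
      have hk := hkey xh 1
      rw [e1, e2] at hk
      rw [← h, zero_mul, zero_add] at hk
      have hqle : q ≤ 0 := by nlinarith
      have hq0 : q = 0 := le_antisymm hqle hq
      have h2 := hfO ((-1, -1) : ℝ × ℝ)
        ⟨show (-1:ℝ) < 0 by norm_num, show (-1:ℝ) < 0 by norm_num⟩
      have hz : ((0, 0) : ℝ × ℝ) ∈ {pp : ℝ × ℝ | ∃ (x : Fin n → ℝ) (t : ℝ),
          Fh A a c x t = pp.1 ∧ Fh B b (d - β) x t = pp.2} :=
        ⟨0, 0, by simp [Fh], by simp [Fh]⟩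
      have h3 := hfD _ hz
      rw [hf] at h2 h3
      rw [← h] at h2 h3
      rw [hq0] at h2 h3
      norm_num at h2 h3
      linarith
  have hmain : ∀ x : Fin n → ℝ, qfun A a c x + q / p * (qfun B b d x - β) ≥ 0 := by
    intro x
    have hk := hkey x 1
    rw [e1, e2] at hk
    rw [ge_iff_le]
    calc (0:ℝ) ≤ (p * qfun A a c x + q * (qfun B b d x - β)) / p := div_nonneg hk hppos.le
      _ = qfun A a c x + q / p * (qfun B b d x - β) := by field_simp
  refine ⟨q / p, div_nonneg hq hppos.le, hmain, ?_⟩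
  intro x
  have hν : 0 ≤ q / p := div_nonneg hq hppos.le
  rw [min_eq_left (by linarith : -(q / p) ≤ 0), max_eq_right (by linarith : -(q / p) ≤ 0),
    neg_neg, zero_mul, add_zero]
  exact hmain x
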